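/- Let $G_k(\sigma^2_0)$ denote the law of the $k$-th iterate of the chain $\sigma^2_k = (\sigma^2_{k-1} U_k + C)/V_k$ (with $U_k \sim \chi^2_p$, $V_k \sim \chi^2_{n+p}$ all independent, $n \ge 5$, $C > 0$), and let $G = \mathrm{InverseGamma}(n/2, C/2)$ be its stationary distribution. Then for every $k \ge 0$, the Wasserstein-1 distance satisfies $d_W[G_k(\sigma^2_0), G] \ge \left|\sigma^2_0 - \frac{C}{n-2}\right|\left(\frac{p}{n+p-2}\right)^k$. -/

import Mathlib

open MeasureTheory ProbabilityTheory

/-- The chi-squared distribution with `d` degrees of freedom. -/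
noncomputable def chiSqMeasure (d : ℕ) : Measure ℝ :=
  gammaMeasure ((d : ℝ) / 2) (1 / 2)

/-- The inverse-gamma distribution with shape `a` and scale `b`. -/
noncomputable def invGammaMeasure (a b : ℝ) : Measure ℝ :=
  (gammaMeasure a b).map (fun x => x⁻¹)

/-- Wasserstein-1 distance between two measures on `ℝ`, in its dual
(Kantorovich–Rubinstein) form: the supremum of `|∫ h dP - ∫ h dQ|` over
1-Lipschitz functions `h`. -/
noncomputable def wassersteinDist (P Q : Measure ℝ) : ℝ :=
  sSup { d : ℝ | ∃ h : ℝ → ℝ, LipschitzWith 1 h ∧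
    d = |(∫ x, h x ∂P) - (∫ x, h x ∂Q)| }

open Real Set
open scoped NNReal ENNReal

lemma gamma_moment {a r s : ℝ} (ha : 0 < a) (hr : 0 < r) (has : 0 < a + s)
    {f : ℝ → ℝ} (hfm : Measurable f) (hf : ∀ x : ℝ, 0 < x → f x = x ^ s) :
    Integrable f (gammaMeasure a r) ∧
      ∫ x, f x ∂gammaMeasure a r = Real.Gamma (a + s) / (Real.Gamma a * r ^ s) := by
  classical
  set g : ℝ → ℝ≥0 := fun x => Real.toNNReal (gammaPDFReal a r x) with hg_def
  have hg : Measurable g := (measurable_gammaPDFReal a r).real_toNNReal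
  have hpdf : gammaPDF a r = fun x => ((g x : ℝ≥0) : ℝ≥0∞) := rfl
  set F : ℝ → ℝ := fun x => gammaPDFReal a r x * f x with hF_def
  have hsmul : (fun x => g x • f x) = F := by
    funext x
    simp only [hg_def, NNReal.smul_def, smul_eq_mul, hF_def,
      Real.coe_toNNReal _ (gammaPDFReal_nonneg ha hr x)]
  set c : ℝ := r ^ a / Real.Gamma a with hc_def
  set G : ℝ → ℝ := fun x => c * (x ^ (a + s - 1) * Real.exp (-(r * x))) with hG_def
  have hFae : F =ᵐ[volume] Set.indicator (Ioi 0) G := by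
    have h0 : ∀ᵐ x : ℝ, x ≠ 0 := by
      rw [ae_iff]; simpa using volume_singleton (a := (0:ℝ))
    filter_upwards [h0] with x hx
    rcases lt_trichotomy x 0 with hlt | heq | hgt
    · rw [Set.indicator_of_notMem (by simp [hlt.not_gt])]
      simp [hF_def, gammaPDFReal, not_le.mpr hlt]
    · exact absurd heq hx
    · rw [Set.indicator_of_mem (mem_Ioi.mpr hgt)]
      simp only [hF_def, hG_def, gammaPDFReal, if_pos hgt.le, hf x hgt]
      rw [show x ^ (a + s - 1) = x ^ (a - 1) * x ^ s by
        rw [← Real.rpow_add hgt]; ring_nf]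
      ring
  have hGint : IntegrableOn G (Ioi 0) := by
    have := (integrableOn_rpow_mul_exp_neg_mul_rpow (p := 1) (s := a + s - 1)
      (b := r) (by linarith) zero_lt_one hr)
    have h2 : IntegrableOn (fun x : ℝ => x ^ (a + s - 1) * Real.exp (-(r * x))) (Ioi 0) := by
      refine this.congr_fun (fun x hx => ?_) measurableSet_Ioi
      beta_reduce
      rw [Real.rpow_one, neg_mul]
    exact h2.const_mul c
  have hFint : Integrable F volume := by
    refine (Integrable.congr ?_ hFae.symm)
    rwa [integrable_indicator_iff measurableSet_Ioi]
  have hFval : ∫ x, F x = Real.Gamma (a + s) / (Real.Gamma a * r ^ s) := by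
    rw [integral_congr_ae hFae, integral_indicator measurableSet_Ioi]
    have : ∫ x in Ioi 0, G x = c * ((1 / r) ^ (a + s) * Real.Gamma (a + s)) := by
      rw [hG_def, integral_const_mul, integral_rpow_mul_exp_neg_mul_Ioi has hr]
    rw [this, hc_def]
    rw [div_rpow zero_le_one hr.le, one_rpow, Real.rpow_add hr]
    have hΓ : Real.Gamma a ≠ 0 := (Real.Gamma_pos_of_pos ha).ne'
    have hra : (r : ℝ) ^ a ≠ 0 := (Real.rpow_pos_of_pos hr a).ne'
    have hrs : (r : ℝ) ^ s ≠ 0 := (Real.rpow_pos_of_pos hr s).ne'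
    field_simp
  constructor
  · rw [gammaMeasure, hpdf]
    have h1 : Integrable (fun x => g x • f x) volume := by rw [hsmul]; exact hFint
    exact (integrable_withDensity_iff_integrable_smul hg).mpr h1
  · rw [gammaMeasure, hpdf, integral_withDensity_eq_integral_smul hg, hsmul, hFval]

lemma gamma_mean {a r : ℝ} (ha : 0 < a) (hr : 0 < r) :
    Integrable (fun x => x) (gammaMeasure a r) ∧
      ∫ x, x ∂gammaMeasure a r = a / r := by
  have h := gamma_moment (s := 1) ha hr (by linarith) (f := fun x => x) measurable_id
    (fun x hx => (Real.rpow_one x).symm)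
  refine ⟨h.1, ?_⟩
  rw [h.2, Real.Gamma_add_one ha.ne', Real.rpow_one]
  have h1 : Real.Gamma a ≠ 0 := (Real.Gamma_pos_of_pos ha).ne'
  field_simp

lemma gamma_inv_mean {a r : ℝ} (ha : 1 < a) (hr : 0 < r) :
    Integrable (fun x => x⁻¹) (gammaMeasure a r) ∧
      ∫ x, x⁻¹ ∂gammaMeasure a r = r / (a - 1) := by
  have h := gamma_moment (s := -1) (by linarith : (0:ℝ) < a) hr
    (by linarith : (0:ℝ) < a + -1) (f := fun x : ℝ => x⁻¹) measurable_inv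
    (fun x hx => (Real.rpow_neg_one x).symm)
  refine ⟨h.1, ?_⟩
  rw [h.2, Real.rpow_neg_one]
  have ha1 : (0:ℝ) < a - 1 := by linarith
  have hG : Real.Gamma a = (a - 1) * Real.Gamma (a - 1) := by
    have := Real.Gamma_add_one ha1.ne'
    rw [sub_add_cancel] at this
    rw [this]
  have h1 : Real.Gamma (a - 1) ≠ 0 := (Real.Gamma_pos_of_pos ha1).ne'
  rw [show a + -1 = a - 1 by ring, hG]
  field_simp

lemma abs_integral_id_sub_le (P Q : Measure ℝ) [IsProbabilityMeasure P] [IsProbabilityMeasure Q]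
    (hP : Integrable (fun x => x) P) (hQ : Integrable (fun x => x) Q) :
    |(∫ x, x ∂P) - (∫ x, x ∂Q)| ≤ wassersteinDist P Q := by
  have key : ∀ (R : Measure ℝ) [IsProbabilityMeasure R], Integrable (fun x => x) R →
      ∀ h : ℝ → ℝ, LipschitzWith 1 h →
      Integrable h R ∧ |(∫ x, h x ∂ R) - h 0| ≤ ∫ x, |x| ∂ R := by
    intro R _ hR h hL
    have habs : Integrable (fun x => |x|) R := hR.abs
    have hb : ∀ x : ℝ, |h x - h 0| ≤ |x| := fun x => by
      have := hL.dist_le_mul x 0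
      simpa [Real.dist_eq] using this
    have hm : AEStronglyMeasurable h R := hL.continuous.aestronglyMeasurable
    have hint' : Integrable (fun x => h x - h 0) R := by
      refine Integrable.mono habs (hm.sub aestronglyMeasurable_const) (ae_of_all _ fun x => ?_)
      simpa [Real.norm_eq_abs, abs_abs] using hb x
    have hint : Integrable h R := by
      have h3 : h = fun x => (h x - h 0) + h 0 := by funext x; ring
      rw [h3]
      exact hint'.add (integrable_const _)
    refine ⟨hint, ?_⟩
    have h2 : (∫ x, h x ∂ R) - h 0 = ∫ x, (h x - h 0) ∂ R := by
      rw [integral_sub hint (integrable_const _), integral_const]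
      simp
    rw [h2]
    have c1 : |∫ x, (h x - h 0) ∂ R| ≤ ∫ x, |h x - h 0| ∂ R := by
      simpa [Real.norm_eq_abs] using
        norm_integral_le_integral_norm (μ := R) (fun x => h x - h 0)
    have c2 : (∫ x, |h x - h 0| ∂ R) ≤ ∫ x, |x| ∂ R := integral_mono hint'.abs habs hb
    exact c1.trans c2
  apply le_csSup
  · refine ⟨(∫ x, |x| ∂P) + (∫ x, |x| ∂Q), ?_⟩
    rintro d ⟨h, hL, rfl⟩
    obtain ⟨hiP, hbP⟩ := key P hP h hL
    obtain ⟨hiQ, hbQ⟩ := key Q hQ h hL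
    have heq : |(∫ x, h x ∂P) - (∫ x, h x ∂Q)|
        = |((∫ x, h x ∂P) - h 0) - ((∫ x, h x ∂Q) - h 0)| := by
      ring_nf
    rw [heq]
    calc |((∫ x, h x ∂P) - h 0) - ((∫ x, h x ∂Q) - h 0)|
        ≤ |(∫ x, h x ∂P) - h 0| + |(∫ x, h x ∂Q) - h 0| := abs_sub _ _
      _ ≤ (∫ x, |x| ∂P) + (∫ x, |x| ∂Q) := add_le_add hbP hbQ
  · exact ⟨fun x => x, LipschitzWith.id, rfl⟩

noncomputable def sigChain (C σ0 : ℝ) {Ω : Type*} (U V : ℕ → Ω → ℝ) : ℕ → Ω → ℝ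
  | 0 => fun _ => σ0
  | (k+1) => fun ω => (sigChain C σ0 U V k ω * U (k+1) ω + C) * (V (k+1) ω)⁻¹

def idxSet (k : ℕ) : Finset (ℕ × Bool) := Finset.range (k+1) ×ˢ Finset.univ

lemma mem_idxSet {i : ℕ × Bool} {k : ℕ} : i ∈ idxSet k ↔ i.1 ≤ k := by
  simp [idxSet, Finset.mem_product, Nat.lt_succ_iff]

lemma sigChain_rep {Ω : Type*} [MeasurableSpace Ω] (C σ0 : ℝ) (U V : ℕ → Ω → ℝ)
    (X : ℕ × Bool → Ω → ℝ) (hXU : ∀ k, X (k, true) = U k) (hXV : ∀ k, X (k, false) = V k)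
    (k : ℕ) :
    ∃ φ : ((i : ↥(idxSet k)) → ℝ) → ℝ, Measurable φ ∧
      ∀ ω, sigChain C σ0 U V k ω = φ (fun i => X i.1 ω) := by
  induction k with
  | zero => exact ⟨fun _ => σ0, measurable_const, fun ω => rfl⟩
  | succ k ih =>
    obtain ⟨φ, hφ, hφeq⟩ := ih
    have hmono : ∀ i : ℕ × Bool, i ∈ idxSet k → i ∈ idxSet (k+1) := fun i hi =>
      mem_idxSet.mpr ((mem_idxSet.mp hi).trans (Nat.le_succ k))
    have hU1 : ((k+1, true) : ℕ × Bool) ∈ idxSet (k+1) := mem_idxSet.mpr le_rfl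
    have hV1 : ((k+1, false) : ℕ × Bool) ∈ idxSet (k+1) := mem_idxSet.mpr le_rfl
    refine ⟨fun v => (φ (fun i => v ⟨i.1, hmono i.1 i.2⟩) * v ⟨(k+1,true), hU1⟩ + C)
      * (v ⟨(k+1,false), hV1⟩)⁻¹, ?_, ?_⟩
    · have hres : Measurable fun (v : (i : ↥(idxSet (k+1))) → ℝ) =>
          (fun i : ↥(idxSet k) => v ⟨i.1, hmono i.1 i.2⟩) :=
        measurable_pi_lambda _ fun i => measurable_pi_apply _
      exact (((hφ.comp hres).mul (measurable_pi_apply _)).add_const C).mul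
        (measurable_pi_apply _).inv
    · intro ω
      show (sigChain C σ0 U V k ω * U (k+1) ω + C) * (V (k+1) ω)⁻¹ = _
      rw [hφeq ω, ← hXU (k+1), ← hXV (k+1)]

/-- lower bound for the Wasserstein distance of the marginal
`σ²`-chain of the standard Bayesian regression Gibbs sampler to its stationary
distribution `G = InverseGamma(n/2, C/2)`:
`d_W[G_k(σ²₀), G] ≥ |σ²₀ - C/(n-2)| (p/(n+p-2))^k`. -/
theorem wasserstein_lower_bound_regression
    {Ω : Type*} [MeasurableSpace Ω] (μ : Measure Ω) [IsProbabilityMeasure μ]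
    (n p : ℕ) (hn : 5 ≤ n) (hp : 1 ≤ p) (C : ℝ) (hC : 0 < C)
    (σ0 : ℝ) (hσ0 : 0 < σ0)
    (U V : ℕ → Ω → ℝ)
    (hU : ∀ k, μ.map (U k) = chiSqMeasure p)
    (hV : ∀ k, μ.map (V k) = chiSqMeasure (n + p))
    (hindep : iIndepFun
      (fun i : ℕ × Bool => if i.2 then U i.1 else V i.1) μ)
    (sig : ℕ → Ω → ℝ)
    (hsig0 : sig 0 = fun _ => σ0)
    (hsig : ∀ k ω, sig (k + 1) ω = (sig k ω * U (k + 1) ω + C) / V (k + 1) ω) :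
    ∀ k : ℕ,
      |σ0 - C / ((n : ℝ) - 2)| * ((p : ℝ) / ((n : ℝ) + (p : ℝ) - 2)) ^ k
        ≤ wassersteinDist (μ.map (sig k)) (invGammaMeasure ((n : ℝ) / 2) (C / 2)) := by
  classical
  -- numeric facts
  have hnR : (5:ℝ) ≤ (n:ℝ) := by exact_mod_cast hn
  have hpR : (1:ℝ) ≤ (p:ℝ) := by exact_mod_cast hp
  have hn2 : (0:ℝ) < (n:ℝ) - 2 := by linarith
  have hd : (0:ℝ) < (n:ℝ) + (p:ℝ) - 2 := by linarith
  have hpprob : IsProbabilityMeasure (chiSqMeasure p) :=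
    isProbabilityMeasure_gammaMeasure (by positivity) (by norm_num)
  have hnpprob : IsProbabilityMeasure (chiSqMeasure (n + p)) := by
    refine isProbabilityMeasure_gammaMeasure ?_ (by norm_num)
    have : (0:ℝ) < ((n + p : ℕ) : ℝ) := by push_cast; linarith
    positivity
  -- measurable modifications
  set X : ℕ × Bool → Ω → ℝ := fun i => if i.2 then U i.1 else V i.1 with hX_def
  have hXae : ∀ i, AEMeasurable (X i) μ := by
    rintro ⟨j, b⟩
    by_contra hcon
    have h0 := Measure.map_of_not_aemeasurable hcon
    cases b
    · have : μ.map (V j) = 0 := h0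
      rw [hV j] at this
      exact (IsProbabilityMeasure.ne_zero _) this
    · have : μ.map (U j) = 0 := h0
      rw [hU j] at this
      exact (IsProbabilityMeasure.ne_zero _) this
  set X' : ℕ × Bool → Ω → ℝ := fun i => (hXae i).mk (X i) with hX'_def
  have hX'm : ∀ i, Measurable (X' i) := fun i => (hXae i).measurable_mk
  have heq : ∀ i, X i =ᵐ[μ] X' i := fun i => (hXae i).ae_eq_mk
  have hindep' : iIndepFun X' μ := by
    rw [iIndepFun_iff_measure_inter_preimage_eq_mul] at hindep ⊢
    intro S sets H
    have h1 : ∀ i ∈ S, μ (X' i ⁻¹' sets i) = μ (X i ⁻¹' sets i) := by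
      intro i _
      apply measure_congr
      rw [Filter.eventuallyEq_set]
      filter_upwards [heq i] with ω hω
      simp [Set.mem_preimage, hω]
    have h2 : μ (⋂ i ∈ S, X' i ⁻¹' sets i) = μ (⋂ i ∈ S, X i ⁻¹' sets i) := by
      apply measure_congr
      rw [Filter.eventuallyEq_set]
      have hall : ∀ᵐ ω ∂μ, ∀ i ∈ S, X i ω = X' i ω :=
        (ae_ball_iff S.countable_toSet).mpr fun i _ => heq i
      filter_upwards [hall] with ω hω
      simp only [Set.mem_iInter, Set.mem_preimage]
      exact forall₂_congr fun i hi => iff_of_eq (congrArg (· ∈ sets i) (hω i hi).symm)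
    rw [h2, hindep S H]
    exact Finset.prod_congr rfl fun i hi => (h1 i hi).symm
  set U' : ℕ → Ω → ℝ := fun j => X' (j, true) with hU'_def
  set V' : ℕ → Ω → ℝ := fun j => X' (j, false) with hV'_def
  have hU'eq : ∀ j, U j =ᵐ[μ] U' j := fun j => heq (j, true)
  have hV'eq : ∀ j, V j =ᵐ[μ] V' j := fun j => heq (j, false)
  have hU'map : ∀ j, μ.map (U' j) = chiSqMeasure p := fun j => by
    rw [← Measure.map_congr (hU'eq j), hU j]
  have hV'map : ∀ j, μ.map (V' j) = chiSqMeasure (n + p) := fun j => by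
    rw [← Measure.map_congr (hV'eq j), hV j]
  -- the measurable chain
  set sg : ℕ → Ω → ℝ := sigChain C σ0 U' V' with hsg_def
  have hsgm : ∀ k, Measurable (sg k) := by
    intro k
    induction k with
    | zero => exact measurable_const
    | succ k ih =>
      exact ((ih.mul (hX'm (k+1, true))).add_const C).mul (hX'm (k+1, false)).inv
  have hsgeq : ∀ k, sig k =ᵐ[μ] sg k := by
    intro k
    induction k with
    | zero =>
      have : sig 0 = sg 0 := by rw [hsig0]; rfl
      rw [this]
    | succ k ih =>
      filter_upwards [ih, heq (k+1, true), heq (k+1, false)] with ω h1 h2 h3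
      rw [hsig k ω, div_eq_mul_inv]
      show _ = (sg k ω * U' (k+1) ω + C) * (V' (k+1) ω)⁻¹
      rw [h1, show U (k+1) ω = U' (k+1) ω from h2, show V (k+1) ω = V' (k+1) ω from h3]
  -- independence facts
  have hrep := sigChain_rep C σ0 U' V' X' (fun _ => rfl) (fun _ => rfl)
  have hindSU : ∀ k, IndepFun (sg k) (U' (k+1)) μ := by
    intro k
    obtain ⟨φ, hφ, hφeq⟩ := hrep k
    have hdisj : Disjoint (idxSet k) ({((k+1 : ℕ), true)} : Finset (ℕ × Bool)) :=
      Finset.disjoint_singleton_right.mpr (by simp [mem_idxSet])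
    have base := hindep'.indepFun_finset (idxSet k) {((k+1 : ℕ), true)} hdisj hX'm
    have hev : Measurable fun v : ((i : ↥({((k+1 : ℕ), true)} : Finset (ℕ × Bool))) → ℝ) =>
        v ⟨((k+1 : ℕ), true), Finset.mem_singleton_self _⟩ := measurable_pi_apply _
    have hcomp := base.comp hφ hev
    have hfe : sg k = φ ∘ (fun ω (i : ↥(idxSet k)) => X' i ω) := funext fun ω => hφeq ω
    rw [hfe]
    exact hcomp
  have hindA : ∀ k, IndepFun (fun ω => sg k ω * U' (k+1) ω + C) (V' (k+1)) μ := by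
    intro k
    obtain ⟨φ, hφ, hφeq⟩ := hrep k
    set T : Finset (ℕ × Bool) := insert ((k+1 : ℕ), true) (idxSet k) with hT_def
    have hdisj : Disjoint T ({((k+1 : ℕ), false)} : Finset (ℕ × Bool)) := by
      rw [Finset.disjoint_singleton_right, hT_def]
      simp [mem_idxSet]
    have base := hindep'.indepFun_finset T {((k+1 : ℕ), false)} hdisj hX'm
    have hmem1 : ((k+1 : ℕ), true) ∈ T := Finset.mem_insert_self _ _
    have hmem2 : ∀ i : ↥(idxSet k), (i : ℕ × Bool) ∈ T :=
      fun i => Finset.mem_insert_of_mem i.2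
    set ψ : ((i : ↥T) → ℝ) → ℝ :=
      fun v => φ (fun i => v ⟨i.1, hmem2 i⟩) * v ⟨((k+1 : ℕ), true), hmem1⟩ + C with hψ_def
    have hψ : Measurable ψ := by
      have hres : Measurable fun (v : (i : ↥T) → ℝ) =>
          (fun i : ↥(idxSet k) => v ⟨i.1, hmem2 i⟩) :=
        measurable_pi_lambda _ fun i => measurable_pi_apply _
      exact ((hφ.comp hres).mul (measurable_pi_apply _)).add_const C
    have hev : Measurable fun v : ((i : ↥({((k+1 : ℕ), false)} : Finset (ℕ × Bool))) → ℝ) =>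
        v ⟨((k+1 : ℕ), false), Finset.mem_singleton_self _⟩ := measurable_pi_apply _
    have hcomp := base.comp hψ hev
    have hfe : (fun ω => sg k ω * U' (k+1) ω + C)
        = ψ ∘ (fun ω (i : ↥T) => X' i ω) := by
      funext ω
      simp only [Function.comp_apply, hψ_def, hsg_def, hφeq ω]
      rfl
    rw [hfe]
    exact hcomp
  -- means
  have hpa : (0:ℝ) < (p:ℝ)/2 := by linarith
  have hUmean : Integrable (fun x => x) (chiSqMeasure p) ∧
      ∫ x, x ∂(chiSqMeasure p) = (p:ℝ) := by
    have h := gamma_mean hpa (by norm_num : (0:ℝ) < 1/2)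
    refine ⟨h.1, ?_⟩
    rw [show (chiSqMeasure p : Measure ℝ) = gammaMeasure ((p:ℝ)/2) (1/2) from rfl, h.2]
    field_simp
  have hnp1 : (1:ℝ) < ((n+p : ℕ):ℝ)/2 := by push_cast; linarith
  have hVmean : Integrable (fun x : ℝ => x⁻¹) (chiSqMeasure (n+p)) ∧
      ∫ x, x⁻¹ ∂(chiSqMeasure (n+p)) = 1/((n:ℝ)+(p:ℝ)-2) := by
    have h := gamma_inv_mean hnp1 (by norm_num : (0:ℝ) < 1/2)
    refine ⟨h.1, ?_⟩
    rw [show (chiSqMeasure (n+p) : Measure ℝ) = gammaMeasure (((n+p:ℕ):ℝ)/2) (1/2) from rfl,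
      h.2, show ((n+p:ℕ):ℝ) = (n:ℝ)+(p:ℝ) by push_cast; ring]
    have e1 : ((n:ℝ)+(p:ℝ))/2 - 1 = ((n:ℝ)+(p:ℝ)-2)/2 := by ring
    rw [e1]
    field_simp
  have hU'int : ∀ j, Integrable (U' j) μ := by
    intro j
    have h1 : Integrable (fun x => x) (μ.map (U' j)) := by rw [hU'map j]; exact hUmean.1
    exact (integrable_map_measure aestronglyMeasurable_id (hX'm _).aemeasurable).mp h1
  have hU'val : ∀ j, ∫ ω, U' j ω ∂μ = (p:ℝ) := by
    intro j
    have h1 : ∫ x, x ∂(μ.map (U' j)) = ∫ ω, U' j ω ∂μ :=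
      integral_map (hX'm (j, true)).aemeasurable aestronglyMeasurable_id
    rw [← h1, hU'map j, hUmean.2]
  have hV'invint : ∀ j, Integrable (fun ω => (V' j ω)⁻¹) μ := by
    intro j
    have h1 : Integrable (fun x : ℝ => x⁻¹) (μ.map (V' j)) := by rw [hV'map j]; exact hVmean.1
    exact (integrable_map_measure measurable_inv.aestronglyMeasurable
      (hX'm _).aemeasurable).mp h1
  have hV'invval : ∀ j, ∫ ω, (V' j ω)⁻¹ ∂μ = 1/((n:ℝ)+(p:ℝ)-2) := by
    intro j
    have h1 : ∫ x, x⁻¹ ∂(μ.map (V' j)) = ∫ ω, (V' j ω)⁻¹ ∂μ :=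
      integral_map (hX'm (j, false)).aemeasurable measurable_inv.aestronglyMeasurable
    rw [← h1, hV'map j, hVmean.2]
  -- main induction
  set m0 : ℝ := C/((n:ℝ)-2) with hm0_def
  set rr : ℝ := (p:ℝ)/((n:ℝ)+(p:ℝ)-2) with hrr_def
  have main : ∀ k, Integrable (sg k) μ ∧
      ∫ ω, sg k ω ∂μ = m0 + (σ0 - m0) * rr^k := by
    intro k
    induction k with
    | zero =>
      refine ⟨integrable_const σ0, ?_⟩
      have h0 : ∫ ω, sg 0 ω ∂μ = σ0 := by
        rw [show (fun ω => sg 0 ω) = fun _ : Ω => σ0 from rfl, integral_const]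
        simp [measure_univ]
      rw [h0, pow_zero]
      ring
    | succ k ih =>
      obtain ⟨hki, hkv⟩ := ih
      have hindSU' := hindSU k
      have hUi := hU'int (k+1)
      have hprod : Integrable (fun ω => sg k ω * U' (k+1) ω) μ := by
        simpa [Pi.mul_def] using hindSU'.integrable_mul hki hUi
      have hA : Integrable (fun ω => sg k ω * U' (k+1) ω + C) μ := hprod.add (integrable_const C)
      have hindA' : IndepFun (fun ω => sg k ω * U' (k+1) ω + C)
          (fun ω => (V' (k+1) ω)⁻¹) μ :=
        (hindA k).comp measurable_id measurable_inv
      have hBi := hV'invint (k+1)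
      have hmul : Integrable (fun ω => (sg k ω * U' (k+1) ω + C) * (V' (k+1) ω)⁻¹) μ := by
        simpa [Pi.mul_def] using hindA'.integrable_mul hA hBi
      refine ⟨hmul, ?_⟩
      have h1 : ∫ ω, sg (k+1) ω ∂μ = (∫ ω, (sg k ω * U' (k+1) ω + C) ∂μ)
          * ∫ ω, (V' (k+1) ω)⁻¹ ∂μ :=
        hindA'.integral_fun_mul_eq_mul_integral hA.aestronglyMeasurable hBi.aestronglyMeasurable
      have h3 : ∫ ω, sg k ω * U' (k+1) ω ∂μ
          = (∫ ω, sg k ω ∂μ) * ∫ ω, U' (k+1) ω ∂μ :=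
        hindSU'.integral_fun_mul_eq_mul_integral hki.aestronglyMeasurable hUi.aestronglyMeasurable
      have h2 : ∫ ω, (sg k ω * U' (k+1) ω + C) ∂μ = (m0 + (σ0-m0)*rr^k) * (p:ℝ) + C := by
        rw [integral_add hprod (integrable_const C), integral_const, h3, hkv, hU'val (k+1)]
        simp [measure_univ]
      rw [h1, h2, hV'invval (k+1)]
      have hmC : m0 * ((n:ℝ)-2) = C := by
        rw [hm0_def]
        field_simp
      rw [hrr_def, hm0_def] at *
      rw [pow_succ]
      field_simp
      ring
  -- conclusion
  intro k
  have hsigae : AEMeasurable (sig k) μ := (hsgm k).aemeasurable.congr (hsgeq k).symm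
  have hmapeq : μ.map (sig k) = μ.map (sg k) := Measure.map_congr (hsgeq k)
  have instP : IsProbabilityMeasure (μ.map (sig k)) := Measure.isProbabilityMeasure_map hsigae
  have hgprob : IsProbabilityMeasure (gammaMeasure ((n:ℝ)/2) (C/2)) :=
    isProbabilityMeasure_gammaMeasure (by linarith) (by linarith)
  have instQ : IsProbabilityMeasure (invGammaMeasure ((n:ℝ)/2) (C/2)) := by
    rw [invGammaMeasure]
    exact Measure.isProbabilityMeasure_map measurable_inv.aemeasurable
  have hPint : Integrable (fun x => x) (μ.map (sig k)) := by
    rw [hmapeq]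
    exact (integrable_map_measure aestronglyMeasurable_id (hsgm k).aemeasurable).mpr (main k).1
  have hPval : ∫ x, x ∂(μ.map (sig k)) = m0 + (σ0 - m0) * rr^k := by
    have h1 : ∫ x, x ∂(μ.map (sg k)) = ∫ ω, sg k ω ∂μ :=
      integral_map (hsgm k).aemeasurable aestronglyMeasurable_id
    rw [hmapeq, h1]
    exact (main k).2
  have hn21 : (1:ℝ) < (n:ℝ)/2 := by linarith
  have hginv := gamma_inv_mean hn21 (by linarith : (0:ℝ) < C/2)
  have hQint : Integrable (fun x => x) (invGammaMeasure ((n:ℝ)/2) (C/2)) := by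
    rw [invGammaMeasure]
    exact (integrable_map_measure aestronglyMeasurable_id
      measurable_inv.aemeasurable).mpr hginv.1
  have hQval : ∫ x, x ∂(invGammaMeasure ((n:ℝ)/2) (C/2)) = m0 := by
    have h1 : ∫ x, x ∂((gammaMeasure ((n:ℝ)/2) (C/2)).map (fun x => x⁻¹))
        = ∫ x, x⁻¹ ∂(gammaMeasure ((n:ℝ)/2) (C/2)) :=
      integral_map measurable_inv.aemeasurable aestronglyMeasurable_id
    rw [invGammaMeasure, h1, hginv.2, hm0_def]
    rw [div_eq_div_iff (by linarith) (by linarith)]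
    ring
  have hfinal := abs_integral_id_sub_le (μ.map (sig k)) (invGammaMeasure ((n:ℝ)/2) (C/2))
    hPint hQint
  rw [hPval, hQval] at hfinal
  have hrrnn : (0:ℝ) ≤ rr := by
    rw [hrr_def]
    positivity
  have habs : |m0 + (σ0 - m0) * rr^k - m0| = |σ0 - m0| * rr^k := by
    rw [show m0 + (σ0 - m0) * rr^k - m0 = (σ0 - m0) * rr^k by ring, abs_mul,
      abs_of_nonneg (pow_nonneg hrrnn k)]
  rw [habs] at hfinal
  exact hfinal
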